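/- Let A be positive semidefinite and T an operator admitting an A-adjoint T^♯. Then dw_A(T)² ≥ max{ w_A(T)² + c_A(T^♯T)², ‖T‖_A⁴ + c_A(T)² }, where c_A(S) = inf{|⟨Sx,x⟩_A| : ‖x‖_A = 1}. -/

import Mathlib

noncomputable section

namespace DW

variable {H : Type*} [NormedAddCommGroup H] [InnerProductSpace ℂ H]

/-- The semi-inner product induced by `A`: `⟨x,y⟩_A = ⟨Ax, y⟩`. -/
def innA (A : H →L[ℂ] H) (x y : H) : ℂ := inner ℂ (A x) y

/-- The seminorm induced by `A`. -/
def normA (A : H →L[ℂ] H) (x : H) : ℝ := Real.sqrt (innA A x x).re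

/-- `T` is `A`-bounded. -/
def IsABounded (A T : H →L[ℂ] H) : Prop := ∃ c > 0, ∀ x, normA A (T x) ≤ c * normA A x

/-- `S` is an `A`-adjoint of `T`. -/
def IsAAdjointPair (A T S : H →L[ℂ] H) : Prop := ∀ x y, innA A (T x) y = innA A x (S y)

/-- The `A`-operator seminorm. -/
def opNormA (A T : H →L[ℂ] H) : ℝ := sSup {r | ∃ x, normA A x = 1 ∧ r = normA A (T x)}

/-- The `A`-minimum modulus. -/
def mA (A T : H →L[ℂ] H) : ℝ := sInf {r | ∃ x, normA A x = 1 ∧ r = normA A (T x)}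

/-- The `A`-numerical radius. -/
def wA (A T : H →L[ℂ] H) : ℝ :=
  sSup {r | ∃ x, normA A x = 1 ∧ r = ‖innA A (T x) x‖}

/-- The `A`-Crawford number. -/
def cA (A T : H →L[ℂ] H) : ℝ :=
  sInf {r | ∃ x, normA A x = 1 ∧ r = ‖innA A (T x) x‖}

/-- The `A`-Davis-Wielandt radius. -/
def dwA (A T : H →L[ℂ] H) : ℝ :=
  sSup {r | ∃ x, normA A x = 1 ∧
    r = Real.sqrt (‖innA A (T x) x‖ ^ 2 + normA A (T x) ^ 4)}

/-- The semi-inner product on `H ⊕ H` induced by `𝔸 = diag(A,A)`. -/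
def innA2 (A : H →L[ℂ] H) (z w : H × H) : ℂ := innA A z.1 w.1 + innA A z.2 w.2

/-- The seminorm on `H ⊕ H` induced by `𝔸 = diag(A,A)`. -/
def normA2 (A : H →L[ℂ] H) (z : H × H) : ℝ := Real.sqrt (innA2 A z z).re

/-- The `𝔸`-numerical radius on `H ⊕ H`, `𝔸 = diag(A,A)`. -/
def wA2 (A : H →L[ℂ] H) (T : H × H →L[ℂ] H × H) : ℝ :=
  sSup {r | ∃ z, normA2 A z = 1 ∧ r = ‖innA2 A (T z) z‖}

/-- The `𝔸`-Davis-Wielandt radius on `H ⊕ H`, `𝔸 = diag(A,A)`. -/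
def dwA2 (A : H →L[ℂ] H) (T : H × H →L[ℂ] H × H) : ℝ :=
  sSup {r | ∃ z, normA2 A z = 1 ∧
    r = Real.sqrt (‖innA2 A (T z) z‖ ^ 2 + normA2 A (T z) ^ 4)}

/-- The block operator `[[0, X], [Y, 0]]` on `H ⊕ H`. -/
def offDiag (X Y : H →L[ℂ] H) : H × H →L[ℂ] H × H :=
  (X.comp (ContinuousLinearMap.snd ℂ H H)).prod (Y.comp (ContinuousLinearMap.fst ℂ H H))

end DW

open DW

variable {H : Type*} [NormedAddCommGroup H] [InnerProductSpace ℂ H] [CompleteSpace H]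

namespace DWAux

variable {H : Type*} [NormedAddCommGroup H] [InnerProductSpace ℂ H] [CompleteSpace H]
variable {A T T' : H →L[ℂ] H}

lemma innA_conj (hA : A.IsPositive) (x y : H) :
    (starRingEnd ℂ) (innA A y x) = innA A x y := by
  unfold innA
  rw [inner_conj_symm, ← ContinuousLinearMap.adjoint_inner_left,
    hA.isSelfAdjoint.adjoint_eq]

lemma re_innA_nonneg (hA : A.IsPositive) (x : H) : 0 ≤ (innA A x x).re := hA.2 x

lemma normA_nonneg (A : H →L[ℂ] H) (x : H) : 0 ≤ normA A x := Real.sqrt_nonneg _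

lemma normA_sq (hA : A.IsPositive) (x : H) : normA A x ^ 2 = (innA A x x).re :=
  Real.sq_sqrt (re_innA_nonneg hA x)

def preCore (hA : A.IsPositive) : PreInnerProductSpace.Core ℂ H where
  inner x y := innA A x y
  conj_inner_symm x y := innA_conj hA x y
  re_inner_nonneg x := hA.2 x
  add_left x y z := by simp [innA, map_add, inner_add_left]
  smul_left x y r := by simp [innA, map_smul, inner_smul_left, mul_comm]

lemma abs_innA_le (hA : A.IsPositive) (x y : H) :
    ‖innA A x y‖ ≤ normA A x * normA A y := by
  have h := @InnerProductSpace.Core.inner_mul_inner_self_le ℂ H _ _ _ (preCore hA) x y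
  have hsymm : ‖innA A y x‖ = ‖innA A x y‖ := by
    rw [← innA_conj hA x y, RCLike.norm_conj]
  have h2 : ‖innA A x y‖ ^ 2 ≤ (innA A x x).re * (innA A y y).re := by
    rw [sq]
    calc ‖innA A x y‖ * ‖innA A x y‖ = ‖innA A x y‖ * ‖innA A y x‖ := by rw [hsymm]
    _ ≤ (innA A x x).re * (innA A y y).re := h
  have := Real.sqrt_le_sqrt h2
  rw [Real.sqrt_sq (norm_nonneg _), Real.sqrt_mul (re_innA_nonneg hA x)] at this
  simpa [normA] using this

lemma abs_innA_self (hA : A.IsPositive) (x : H) :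
    ‖innA A x x‖ = normA A x ^ 2 := by
  have him : (innA A x x).im = 0 := by
    have h := innA_conj hA x x
    exact Complex.conj_eq_iff_im.mp h
  have : innA A x x = ((innA A x x).re : ℂ) := Complex.ext rfl (by simp [him])
  rw [this, Complex.norm_of_nonneg (re_innA_nonneg hA x), normA_sq hA]

lemma normA_le (hA : A.IsPositive) (y : H) :
    normA A y ≤ Real.sqrt ‖A‖ * ‖y‖ := by
  have h1 : (innA A y y).re ≤ ‖A‖ * ‖y‖ ^ 2 := by
    have h2 : (innA A y y).re ≤ ‖innA A y y‖ := Complex.re_le_norm _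
    have h3 : ‖innA A y y‖ ≤ ‖A y‖ * ‖y‖ := norm_inner_le_norm _ _
    have h4 : ‖A y‖ ≤ ‖A‖ * ‖y‖ := A.le_opNorm y
    nlinarith [norm_nonneg y]
  calc normA A y ≤ Real.sqrt (‖A‖ * ‖y‖ ^ 2) := Real.sqrt_le_sqrt h1
  _ = Real.sqrt ‖A‖ * ‖y‖ := by
      rw [Real.sqrt_mul (norm_nonneg A), Real.sqrt_sq (norm_nonneg y)]

lemma adj_rev (hA : A.IsPositive) (hT' : IsAAdjointPair A T T') (u w : H) :
    innA A (T' u) w = innA A u (T w) := by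
  rw [← innA_conj hA (T' u) w, ← hT' w u, innA_conj hA u (T w)]

lemma S_selfadj (hA : A.IsPositive) (hT' : IsAAdjointPair A T T') (u v : H) :
    innA A ((T'.comp T) u) v = innA A u ((T'.comp T) v) := by
  have h1 : innA A (T' (T u)) v = innA A (T u) (T v) := adj_rev hA hT' (T u) v
  have h2 : innA A (T u) (T v) = innA A u (T' (T v)) := hT' u (T v)
  simpa using h1.trans h2

lemma Spow_selfadj (hA : A.IsPositive) (hT' : IsAAdjointPair A T T') (n : ℕ) (u v : H) :
    innA A (((T'.comp T) ^ n) u) v = innA A u (((T'.comp T) ^ n) v) := by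
  induction n generalizing u v with
  | zero => simp
  | succ n ih =>
    have e1 : ((T'.comp T) ^ (n+1)) u = ((T'.comp T) ^ n) ((T'.comp T) u) := by
      rw [pow_succ]; simp [ContinuousLinearMap.mul_apply]
    have e2 : ((T'.comp T) ^ (n+1)) v = (T'.comp T) (((T'.comp T) ^ n) v) := by
      rw [pow_succ']; simp [ContinuousLinearMap.mul_apply]
    rw [e1, e2, ih, S_selfadj hA hT']

end DWAux

namespace DWAux2

variable {H : Type*} [NormedAddCommGroup H] [InnerProductSpace ℂ H] [CompleteSpace H]
variable {A T T' : H →L[ℂ] H}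

open DWAux

lemma key_bound (hA : A.IsPositive) (hT' : IsAAdjointPair A T T') {x : H}
    (hx : normA A x = 1) : normA A (T x) ^ 2 ≤ max ‖T'.comp T‖ 1 := by
  set S := T'.comp T with hS
  set M : ℝ := max ‖S‖ 1 with hM
  have hM1 : (1:ℝ) ≤ M := le_max_right _ _
  have hM0 : (0:ℝ) ≤ M := by linarith
  set C : ℝ := Real.sqrt ‖A‖ * ‖x‖ with hC
  have hC1 : (1:ℝ) ≤ C := by
    have := normA_le hA x; rw [hx] at this; exact this
  have hCpos : (0:ℝ) < C := by linarith
  set a : ℕ → ℝ := fun n => normA A ((S ^ (2^n : ℕ)) x) with ha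
  have hanon : ∀ n, 0 ≤ a n := fun n => normA_nonneg _ _
  have step : ∀ n, a n ^ 2 ≤ a (n+1) := by
    intro n
    have e : (S ^ (2^n : ℕ)) ((S ^ (2^n : ℕ)) x) = (S ^ (2^(n+1) : ℕ)) x := by
      rw [pow_succ, mul_two, pow_add, ContinuousLinearMap.mul_apply]
    have h1 : innA A ((S ^ (2^n : ℕ)) x) ((S ^ (2^n : ℕ)) x)
        = innA A x ((S ^ (2^(n+1) : ℕ)) x) := by
      rw [Spow_selfadj hA hT' (2^n) x ((S ^ (2^n : ℕ)) x), e]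
    calc a n ^ 2 = (innA A ((S ^ (2^n : ℕ)) x) ((S ^ (2^n : ℕ)) x)).re := normA_sq hA _
    _ = (innA A x ((S ^ (2^(n+1) : ℕ)) x)).re := by rw [h1]
    _ ≤ ‖innA A x ((S ^ (2^(n+1) : ℕ)) x)‖ := Complex.re_le_norm _
    _ ≤ normA A x * normA A ((S ^ (2^(n+1) : ℕ)) x) := abs_innA_le hA _ _
    _ = a (n+1) := by rw [hx, one_mul]
  have growth : ∀ n, a n ≤ C * M ^ (2^n : ℕ) := by
    intro n
    have h1 : a n ≤ Real.sqrt ‖A‖ * ‖(S ^ (2^n : ℕ)) x‖ := normA_le hA _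
    have h2 : ‖(S ^ (2^n : ℕ)) x‖ ≤ ‖S‖ ^ (2^n : ℕ) * ‖x‖ := by
      calc ‖(S ^ (2^n : ℕ)) x‖ ≤ ‖S ^ (2^n : ℕ)‖ * ‖x‖ := (S ^ (2^n : ℕ)).le_opNorm x
      _ ≤ ‖S‖ ^ (2^n : ℕ) * ‖x‖ := by
          gcongr
          exact norm_pow_le' S (pow_pos (by norm_num) _)
    have h3 : ‖S‖ ^ (2^n : ℕ) ≤ M ^ (2^n : ℕ) :=
      pow_le_pow_left₀ (norm_nonneg _) (le_max_left _ _) _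
    have h4 : a n ≤ Real.sqrt ‖A‖ * (M ^ (2^n : ℕ) * ‖x‖) := by
      refine h1.trans ?_
      have h5 : ‖(S ^ (2^n : ℕ)) x‖ ≤ M ^ (2^n : ℕ) * ‖x‖ :=
        h2.trans (mul_le_mul_of_nonneg_right h3 (norm_nonneg x))
      exact mul_le_mul_of_nonneg_left h5 (Real.sqrt_nonneg _)
    calc a n ≤ Real.sqrt ‖A‖ * (M ^ (2^n : ℕ) * ‖x‖) := h4
    _ = C * M ^ (2^n : ℕ) := by ring
  have chain : ∀ n, a 0 ≤ a n ^ ((2⁻¹:ℝ) ^ n) := by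
    intro n
    induction n with
    | zero => simp
    | succ n ih =>
      have h1 : a n ≤ a (n+1) ^ ((2:ℝ)⁻¹) := by
        have h2 := step n
        calc a n = (a n ^ (2:ℕ)) ^ ((2:ℝ)⁻¹) := by
              rw [← Real.rpow_natCast (a n) 2, ← Real.rpow_mul (hanon n)]
              norm_num
        _ ≤ a (n+1) ^ ((2:ℝ)⁻¹) := Real.rpow_le_rpow (by positivity) h2 (by norm_num)
      calc a 0 ≤ a n ^ ((2⁻¹:ℝ) ^ n) := ih
      _ ≤ (a (n+1) ^ ((2:ℝ)⁻¹)) ^ ((2⁻¹:ℝ) ^ n) :=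
          Real.rpow_le_rpow (hanon n) h1 (by positivity)
      _ = a (n+1) ^ ((2⁻¹:ℝ) ^ (n+1)) := by
          rw [← Real.rpow_mul (hanon (n+1)), pow_succ']
  have hcomb : ∀ n, a 0 ≤ C ^ ((2⁻¹:ℝ) ^ n) * M := by
    intro n
    have h2 : a n ^ ((2⁻¹:ℝ) ^ n) ≤ (C * M ^ (2^n : ℕ)) ^ ((2⁻¹:ℝ) ^ n) :=
      Real.rpow_le_rpow (hanon n) (growth n) (by positivity)
    have h3 : (C * M ^ (2^n : ℕ)) ^ ((2⁻¹:ℝ) ^ n) = C ^ ((2⁻¹:ℝ) ^ n) * M := by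
      rw [Real.mul_rpow hCpos.le (pow_nonneg hM0 _)]
      congr 1
      rw [← Real.rpow_natCast M (2^n), ← Real.rpow_mul hM0]
      have : ((2^n : ℕ) : ℝ) * (2⁻¹:ℝ) ^ n = 1 := by
        push_cast
        rw [← mul_pow]
        norm_num
      rw [this, Real.rpow_one]
    exact (chain n).trans (h3 ▸ h2)
  have htend : Filter.Tendsto (fun n : ℕ => C ^ ((2⁻¹:ℝ) ^ n) * M)
      Filter.atTop (nhds (1 * M)) := by
    apply Filter.Tendsto.mul_const
    have h0 : Filter.Tendsto (fun n : ℕ => ((2⁻¹:ℝ)) ^ n) Filter.atTop (nhds 0) :=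
      tendsto_pow_atTop_nhds_zero_of_lt_one (by norm_num) (by norm_num)
    have hc : ContinuousAt (fun e : ℝ => C ^ e) 0 :=
      Real.continuousAt_const_rpow (ne_of_gt hCpos)
    have := hc.tendsto.comp h0
    simpa [Real.rpow_zero, Function.comp_def] using this
  have ha0M : a 0 ≤ M := by
    have := ge_of_tendsto' htend hcomb
    linarith
  have hfin : innA A (T x) (T x) = innA A x (S x) := hT' x (T x)
  calc normA A (T x) ^ 2 = (innA A (T x) (T x)).re := normA_sq hA _
  _ = (innA A x (S x)).re := by rw [hfin]
  _ ≤ ‖innA A x (S x)‖ := Complex.re_le_norm _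
  _ ≤ normA A x * normA A (S x) := abs_innA_le hA _ _
  _ = a 0 := by rw [hx, one_mul, ha]; norm_num
  _ ≤ M := ha0M

end DWAux2


theorem stmt4 (A T T' : H →L[ℂ] H) (hA : A.IsPositive) (hT' : IsAAdjointPair A T T') :
    max (wA A T ^ 2 + cA A (T'.comp T) ^ 2) (opNormA A T ^ 4 + cA A T ^ 2)
      ≤ dwA A T ^ 2 := by
  classical
  open DWAux DWAux2 in
  by_cases hex : ∃ x : H, normA A x = 1
  · obtain ⟨x₀, hx₀⟩ := hex
    simp only [wA, cA, opNormA, dwA]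
    set M : ℝ := max ‖T'.comp T‖ 1 with hMdef
    have hM1 : (1:ℝ) ≤ M := le_max_right _ _
    have hbT : ∀ x : H, normA A x = 1 → normA A (T x) ^ 2 ≤ M :=
      fun x hx => key_bound hA hT' hx
    have hbT1 : ∀ x : H, normA A x = 1 → normA A (T x) ≤ M := fun x hx => by
      nlinarith [normA_nonneg A (T x), hbT x hx, hM1]
    have habs : ∀ x : H, normA A x = 1 → ‖innA A (T x) x‖ ≤ M := by
      intro x hx
      have h := abs_innA_le hA (T x) x
      rw [hx, mul_one] at h
      exact h.trans (hbT1 x hx)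
    -- the dwA quantity
    set D : ℝ := sSup {r | ∃ x, normA A x = 1 ∧
      r = Real.sqrt (‖innA A (T x) x‖ ^ 2 + normA A (T x) ^ 4)} with hDdef
    have hdwBdd : BddAbove {r | ∃ x, normA A x = 1 ∧
        r = Real.sqrt (‖innA A (T x) x‖ ^ 2 + normA A (T x) ^ 4)} := by
      refine ⟨Real.sqrt (M^2 + M^4), ?_⟩
      rintro r ⟨x, hx, rfl⟩
      apply Real.sqrt_le_sqrt
      have h1 := habs x hx
      have h2 := hbT1 x hx
      have h3 := norm_nonneg (innA A (T x) x)
      have h4 := normA_nonneg A (T x)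
      have h5 := pow_le_pow_left₀ h3 h1 2
      have h6 := pow_le_pow_left₀ h4 h2 4
      linarith
    have hDmem : ∀ x : H, normA A x = 1 →
        Real.sqrt (‖innA A (T x) x‖ ^ 2 + normA A (T x) ^ 4) ≤ D :=
      fun x hx => le_csSup hdwBdd ⟨x, hx, rfl⟩
    have hD0 : 0 ≤ D := (Real.sqrt_nonneg _).trans (hDmem x₀ hx₀)
    have hDsq : ∀ x : H, normA A x = 1 →
        ‖innA A (T x) x‖ ^ 2 + normA A (T x) ^ 4 ≤ D ^ 2 := by
      intro x hx
      have h := hDmem x hx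
      have hnn : 0 ≤ ‖innA A (T x) x‖ ^ 2 + normA A (T x) ^ 4 := by positivity
      nlinarith [Real.sq_sqrt hnn, Real.sqrt_nonneg
        (‖innA A (T x) x‖ ^ 2 + normA A (T x) ^ 4)]
    -- the Crawford number of T
    set c : ℝ := sInf {r | ∃ x, normA A x = 1 ∧ r = ‖innA A (T x) x‖} with hcdef
    have hcBdd : BddBelow {r | ∃ x, normA A x = 1 ∧ r = ‖innA A (T x) x‖} := by
      refine ⟨0, ?_⟩
      rintro r ⟨x, hx, rfl⟩
      positivity
    have hc0 : 0 ≤ c := by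
      refine le_csInf ⟨_, ⟨x₀, hx₀, rfl⟩⟩ ?_
      rintro r ⟨x, hx, rfl⟩
      positivity
    have hcle : ∀ x : H, normA A x = 1 → c ≤ ‖innA A (T x) x‖ :=
      fun x hx => csInf_le hcBdd ⟨x, hx, rfl⟩
    -- the Crawford number of T'T
    have hSx : ∀ x : H, ‖innA A ((T'.comp T) x) x‖ = normA A (T x) ^ 2 := by
      intro x
      have h1 : innA A ((T'.comp T) x) x = innA A (T x) (T x) := adj_rev hA hT' (T x) x
      rw [h1, abs_innA_self hA]
    set cS : ℝ := sInf {r | ∃ x, normA A x = 1 ∧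
      r = ‖innA A ((T'.comp T) x) x‖} with hcSdef
    have hcSBdd : BddBelow {r | ∃ x, normA A x = 1 ∧
        r = ‖innA A ((T'.comp T) x) x‖} := by
      refine ⟨0, ?_⟩
      rintro r ⟨x, hx, rfl⟩
      positivity
    have hcS0 : 0 ≤ cS := by
      refine le_csInf ⟨_, ⟨x₀, hx₀, rfl⟩⟩ ?_
      rintro r ⟨x, hx, rfl⟩
      positivity
    have hcSle : ∀ x : H, normA A x = 1 → cS ≤ normA A (T x) ^ 2 := by
      intro x hx
      have h := csInf_le hcSBdd ⟨x, hx, rfl⟩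
      rwa [hSx x] at h
    -- part 2 : opNormA ^ 4 + c ^ 2 ≤ D ^ 2
    have hX2 : c ^ 2 ≤ D ^ 2 := by
      have h1 := hcle x₀ hx₀
      have h2 := hDsq x₀ hx₀
      have h3 := pow_le_pow_left₀ hc0 h1 2
      have h4 := pow_nonneg (normA_nonneg A (T x₀)) 4
      linarith
    set b : ℝ := Real.sqrt (Real.sqrt (D^2 - c^2)) with hbdef
    have hb0 : 0 ≤ b := Real.sqrt_nonneg _
    have hb4 : b ^ 4 = D^2 - c^2 := by
      have h1 : (0:ℝ) ≤ D^2 - c^2 := by linarith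
      have h2 : b^4 = (b^2)^2 := by ring
      rw [h2, hbdef, Real.sq_sqrt (Real.sqrt_nonneg _), Real.sq_sqrt h1]
    have hopBdd : BddAbove {r | ∃ x, normA A x = 1 ∧ r = normA A (T x)} := by
      refine ⟨M, ?_⟩
      rintro r ⟨x, hx, rfl⟩
      exact hbT1 x hx
    have hop0 : 0 ≤ sSup {r | ∃ x, normA A x = 1 ∧ r = normA A (T x)} :=
      (normA_nonneg A (T x₀)).trans (le_csSup hopBdd ⟨x₀, hx₀, rfl⟩)
    have hople : sSup {r | ∃ x, normA A x = 1 ∧ r = normA A (T x)} ≤ b := by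
      refine csSup_le ⟨_, ⟨x₀, hx₀, rfl⟩⟩ ?_
      rintro r ⟨x, hx, rfl⟩
      have h1 : normA A (T x) ^ 4 ≤ b ^ 4 := by
        rw [hb4]
        have h2 := hDsq x hx
        have h3 := hcle x hx
        have h4 := pow_le_pow_left₀ hc0 h3 2
        linarith
      exact le_of_pow_le_pow_left₀ (by norm_num) hb0 h1
    have part2 : sSup {r | ∃ x, normA A x = 1 ∧ r = normA A (T x)} ^ 4 + c ^ 2 ≤ D ^ 2 := by
      have h := pow_le_pow_left₀ hop0 hople 4
      rw [hb4] at h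
      linarith
    -- part 1 : wA ^ 2 + cS ^ 2 ≤ D ^ 2
    have hXS : cS ^ 2 ≤ D ^ 2 := by
      have h1 := hcSle x₀ hx₀
      have h2 := hDsq x₀ hx₀
      have h3 := pow_le_pow_left₀ hcS0 h1 2
      have h4 := sq_nonneg (‖innA A (T x₀) x₀‖)
      have h5 : (normA A (T x₀) ^ 2) ^ 2 = normA A (T x₀) ^ 4 := by ring
      linarith
    have hwBdd : BddAbove {r | ∃ x, normA A x = 1 ∧ r = ‖innA A (T x) x‖} := by
      refine ⟨M, ?_⟩
      rintro r ⟨x, hx, rfl⟩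
      exact habs x hx
    have hw0 : 0 ≤ sSup {r | ∃ x, normA A x = 1 ∧ r = ‖innA A (T x) x‖} :=
      (norm_nonneg (innA A (T x₀) x₀)).trans (le_csSup hwBdd ⟨x₀, hx₀, rfl⟩)
    have hwle : sSup {r | ∃ x, normA A x = 1 ∧ r = ‖innA A (T x) x‖}
        ≤ Real.sqrt (D^2 - cS^2) := by
      refine csSup_le ⟨_, ⟨x₀, hx₀, rfl⟩⟩ ?_
      rintro r ⟨x, hx, rfl⟩
      have h1 : ‖innA A (T x) x‖ ^ 2 ≤ D^2 - cS^2 := by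
        have h2 := hDsq x hx
        have h3 := hcSle x hx
        have h4 := pow_le_pow_left₀ hcS0 h3 2
        have h5 : (normA A (T x) ^ 2) ^ 2 = normA A (T x) ^ 4 := by ring
        linarith
      have h4 := Real.sqrt_le_sqrt h1
      rwa [Real.sqrt_sq (norm_nonneg _)] at h4
    have part1 : sSup {r | ∃ x, normA A x = 1 ∧ r = ‖innA A (T x) x‖} ^ 2
        + cS ^ 2 ≤ D ^ 2 := by
      have h := pow_le_pow_left₀ hw0 hwle 2
      rw [Real.sq_sqrt (by linarith : (0:ℝ) ≤ D^2 - cS^2)] at h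
      linarith
    exact max_le part1 part2
  · have hgen : ∀ f : H → ℝ, {r : ℝ | ∃ x, normA A x = 1 ∧ r = f x} = ∅ := by
      intro f
      ext r
      simp only [Set.mem_setOf_eq, Set.mem_empty_iff_false, iff_false, not_exists]
      rintro x ⟨hx, -⟩
      exact hex ⟨x, hx⟩
    simp only [wA, cA, opNormA, dwA, hgen, Real.sSup_empty, Real.sInf_empty]
    norm_num
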